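/- Let q = p² for an odd prime p and let E = SL₂(F_p) viewed inside M₂(F_q). Then for every positive integer k, the determinant set det(2kE) of the 2k-fold sumset E + ⋯ + E is contained in F_p, hence is a proper subset of F_q, while |E| = p³ − p ∼ q^{3/2}. -/

import Mathlib

open Finset Pointwise

/-- The `n`-fold iterated sumset of a finite set in an additive commutative monoid. -/
def iterSum {M : Type*} [AddCommMonoid M] [DecidableEq M] : ℕ → Finset M → Finset M
  | 0, _ => {0}
  | n + 1, E => E + iterSum n E

/-- Cardinality of SL₂ over `ZMod p`. -/
lemma card_SL2 (p : ℕ) (hp : p.Prime) :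
    Nat.card (Matrix.SpecialLinearGroup (Fin 2) (ZMod p)) = p ^ 3 - p := by
  haveI : Fact p.Prime := ⟨hp⟩
  have hp2 : 2 ≤ p := hp.two_le
  set F := ZMod p
  set d : GL (Fin 2) F →* Fˣ := Matrix.GeneralLinearGroup.det
  -- determinant is surjective
  have hsurj : Function.Surjective d := by
    intro u
    refine ⟨⟨Matrix.diagonal ![u.val, 1], Matrix.diagonal ![u.inv, 1], ?_, ?_⟩, ?_⟩
    · ext i j
      fin_cases i <;> fin_cases j <;>
        simp [Matrix.mul_apply, Fin.sum_univ_two, u.val_inv, u.inv_val]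
    · ext i j
      fin_cases i <;> fin_cases j <;>
        simp [Matrix.mul_apply, Fin.sum_univ_two, u.val_inv, u.inv_val]
    · apply Units.ext
      show (Matrix.diagonal ![u.val, 1]).det = u.val
      rw [Matrix.det_diagonal]
      simp [Fin.prod_univ_two]
  -- kernel of det is SL₂
  have ekq : (d.ker : Type) ≃ Matrix.SpecialLinearGroup (Fin 2) F :=
    { toFun := fun M => ⟨(M.1 : Matrix (Fin 2) (Fin 2) F), by
        have h := M.2
        rw [MonoidHom.mem_ker] at h
        exact congrArg Units.val h⟩
      invFun := fun A => ⟨Matrix.SpecialLinearGroup.toGL A, by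
        rw [MonoidHom.mem_ker]
        exact Matrix.SpecialLinearGroup.coeToGL_det A⟩
      left_inv := fun M => Subtype.ext (Units.ext rfl)
      right_inv := fun A => Subtype.ext rfl }
  have hker : Nat.card d.ker = Nat.card (Matrix.SpecialLinearGroup (Fin 2) F) :=
    Nat.card_congr ekq
  have hquot : Nat.card (GL (Fin 2) F ⧸ d.ker) = p - 1 := by
    rw [Nat.card_congr (QuotientGroup.quotientKerEquivRange d).toEquiv]
    rw [MonoidHom.range_eq_top.mpr hsurj]
    rw [Nat.card_congr Subgroup.topEquiv.toEquiv]
    rw [Nat.card_eq_fintype_card, ZMod.card_units]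
  have hGL : Nat.card (GL (Fin 2) F) = (p ^ 2 - 1) * (p ^ 2 - p) := by
    rw [Matrix.card_GL_field]
    rw [Fin.prod_univ_two]
    simp [F, ZMod.card]
  have key := Subgroup.card_eq_card_quotient_mul_card_subgroup d.ker
  rw [hGL, hquot, hker] at key
  have harith : (p ^ 2 - 1) * (p ^ 2 - p) = (p - 1) * (p ^ 3 - p) := by
    have h1 : 1 ≤ p ^ 2 := Nat.one_le_pow _ _ (by omega)
    have h2 : p ≤ p ^ 2 := Nat.le_self_pow (by norm_num) p
    have h3 : p ≤ p ^ 3 := Nat.le_self_pow (by norm_num) p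
    have h4 : 1 ≤ p := by omega
    zify [h1, h2, h3, h4]
    ring
  rw [harith] at key
  exact (Nat.eq_of_mul_eq_mul_left (by omega) key.symm)

theorem stmt_19 (p : ℕ) (hp : p.Prime) (hodd : Odd p)
    (K : Type*) [Field K] [Fintype K] [DecidableEq K] [CharP K p]
    (hq : Fintype.card K = p ^ 2)
    (E : Finset (Matrix (Fin 2) (Fin 2) K))
    (hE : ∀ x : Matrix (Fin 2) (Fin 2) K,
      x ∈ E ↔ ((∀ a b, x a b ∈ Set.range (ZMod.castHom (dvd_refl p) K)) ∧ x.det = 1)) :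
    (∀ k : ℕ, 1 ≤ k → ∀ x ∈ iterSum (2 * k) E,
        x.det ∈ Set.range (ZMod.castHom (dvd_refl p) K)) ∧
    Set.range (⇑(ZMod.castHom (dvd_refl p) K)) ≠ Set.univ ∧
    E.card = p ^ 3 - p := by
  haveI : Fact p.Prime := ⟨hp⟩
  set f : ZMod p →+* K := ZMod.castHom (dvd_refl p) K with hf
  have hfinj : Function.Injective f := f.injective
  -- entries of elements of iterated sumsets lie in the range of f
  have hentries : ∀ n : ℕ, ∀ x ∈ iterSum n E, ∀ a b : Fin 2, x a b ∈ Set.range f := by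
    intro n
    induction n with
    | zero =>
      intro x hx a b
      simp only [iterSum, Finset.mem_singleton] at hx
      subst hx
      exact ⟨0, by simp⟩
    | succ m ih =>
      intro x hx a b
      simp only [iterSum] at hx
      rw [Finset.mem_add] at hx
      obtain ⟨y, hy, z, hz, rfl⟩ := hx
      obtain ⟨c, hc⟩ := ((hE y).mp hy).1 a b
      obtain ⟨e, he⟩ := ih z hz a b
      exact ⟨c + e, by simp [Matrix.add_apply, hc, he]⟩
  refine ⟨?_, ?_, ?_⟩
  · -- part 1: determinants stay in the range of f
    intro k _ x hx
    have h := hentries (2 * k) x hx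
    obtain ⟨a, ha⟩ := h 0 0
    obtain ⟨b, hb⟩ := h 0 1
    obtain ⟨c, hc⟩ := h 1 0
    obtain ⟨e, he⟩ := h 1 1
    refine ⟨a * e - b * c, ?_⟩
    rw [Matrix.det_fin_two, map_sub, map_mul, map_mul, ha, hb, hc, he]
  · -- part 2: the range of f is proper
    intro hcontra
    have hsurj : Function.Surjective f := by
      rw [← Set.range_eq_univ, hcontra]
    have hle : Fintype.card K ≤ Fintype.card (ZMod p) :=
      Fintype.card_le_of_surjective f hsurj
    rw [hq, ZMod.card] at hle
    have : p < p ^ 2 := by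
      have := hp.two_le
      nlinarith
    omega
  · -- part 3: cardinality of E
    have e : Matrix.SpecialLinearGroup (Fin 2) (ZMod p) ≃ {x // x ∈ E} := by
      refine Equiv.ofBijective (fun A => ⟨A.1.map f, ?_⟩) ⟨?_, ?_⟩
      · rw [hE]
        constructor
        · intro a b; exact ⟨A.1 a b, rfl⟩
        · have h := RingHom.map_det f A.1
          rw [RingHom.mapMatrix_apply] at h
          rw [← h, A.2, map_one]
      · intro A B hAB
        apply Subtype.ext
        apply Matrix.ext
        intro i j
        have := congrArg (fun x => (x : Matrix (Fin 2) (Fin 2) K) i j)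
          (Subtype.mk_eq_mk.mp hAB)
        exact hfinj this
      · rintro ⟨x, hx⟩
        obtain ⟨hx1, hx2⟩ := (hE x).mp hx
        choose A hA using fun a b => hx1 a b
        have hmap : (Matrix.of A).map f = x := by
          apply Matrix.ext; intro i j; exact hA i j
        have hdet : (Matrix.of A).det = 1 := by
          apply hfinj
          have h := RingHom.map_det f (Matrix.of A)
          rw [RingHom.mapMatrix_apply] at h
          rw [h, hmap, hx2, map_one]
        exact ⟨⟨Matrix.of A, hdet⟩, Subtype.ext hmap⟩
    have := card_SL2 p hp
    rw [Nat.card_eq_fintype_card, Fintype.card_congr e, Fintype.card_coe] at this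
    exact this
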